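/- If f ∈ ℝ[x,y] is a homogeneous polynomial of degree n ≥ 2 with no repeated real linear factors and at least one real linear factor (more generally, with no repeated irreducible factors), then Hess(f) is not the zero polynomial. -/

import Mathlib

open MvPolynomial

noncomputable def Hess (f : MvPolynomial (Fin 2) ℝ) : MvPolynomial (Fin 2) ℝ :=
  pderiv 0 (pderiv 0 f) * pderiv 1 (pderiv 1 f) - (pderiv 0 (pderiv 1 f)) ^ 2

lemma degree_fin2 (d : Fin 2 →₀ ℕ) : d.degree = d 0 + d 1 := by
  rw [Finsupp.degree_apply, Finset.sum_subset (Finset.subset_univ _)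
    (by intro i _ hi; simpa using hi), Fin.sum_univ_two]

lemma X_mul_pderiv_monomial (i : Fin 2) (d : Fin 2 →₀ ℕ) (c : ℝ) :
    X i * pderiv i (monomial d c) = monomial d (c * d i) := by
  rw [pderiv_monomial]
  rcases Nat.eq_zero_or_pos (d i) with h | h
  · simp [h]
  · rw [show (X i : MvPolynomial (Fin 2) ℝ) = monomial (Finsupp.single i 1) 1 from rfl,
      monomial_mul, one_mul, add_tsub_cancel_of_le (Finsupp.single_le_iff.mpr h)]

/-- Euler's identity for homogeneous polynomials in two variables. -/
lemma euler {f : MvPolynomial (Fin 2) ℝ} {n : ℕ} (h : f.IsHomogeneous n) :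
    X 0 * pderiv 0 f + X 1 * pderiv 1 f = C (n : ℝ) * f := by
  conv_lhs => rw [f.as_sum]
  conv_rhs => rw [f.as_sum]
  rw [map_sum (pderiv 0), map_sum (pderiv 1), Finset.mul_sum, Finset.mul_sum, Finset.mul_sum,
    ← Finset.sum_add_distrib]
  refine Finset.sum_congr rfl fun d hd => ?_
  rw [X_mul_pderiv_monomial, X_mul_pderiv_monomial, ← map_add, C_mul_monomial]
  congr 1
  have hdeg : d 0 + d 1 = n := by
    rw [← degree_fin2, Finsupp.degree_eq_weight_one]
    exact h (mem_support_iff.mp hd)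
  rw [← hdeg]
  push_cast
  ring

lemma isHomogeneous_pderiv {f : MvPolynomial (Fin 2) ℝ} {n : ℕ} (h : f.IsHomogeneous n)
    (i : Fin 2) : (pderiv i f).IsHomogeneous (n - 1) := by
  rw [f.as_sum, map_sum]
  apply IsHomogeneous.sum
  intro d hd
  rw [pderiv_monomial]
  rcases Nat.eq_zero_or_pos (d i) with h0 | h0
  · rw [h0]; simpa using isHomogeneous_zero (Fin 2) ℝ (n - 1)
  · apply isHomogeneous_monomial
    have hdn : d.degree = n := by
      rw [Finsupp.degree_eq_weight_one]; exact h (mem_support_iff.mp hd)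
    have e0 : ((d - Finsupp.single i 1 : Fin 2 →₀ ℕ)) 0 = d 0 - Finsupp.single i 1 0 :=
      Finsupp.tsub_apply d (Finsupp.single i 1) 0
    have e1 : ((d - Finsupp.single i 1 : Fin 2 →₀ ℕ)) 1 = d 1 - Finsupp.single i 1 1 :=
      Finsupp.tsub_apply d (Finsupp.single i 1) 1
    rw [degree_fin2] at hdn ⊢
    rw [e0, e1]
    fin_cases i <;> simp [Finsupp.single_apply] at h0 ⊢ <;> omega

lemma pderiv_pderiv_comm (i j : Fin 2) (f : MvPolynomial (Fin 2) ℝ) :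
    pderiv i (pderiv j f) = pderiv j (pderiv i f) := by
  rcases eq_or_ne i j with rfl | hij
  · rfl
  induction f using MvPolynomial.induction_on' with
  | monomial d a =>
    simp only [pderiv_monomial]
    have h1 : ((d - Finsupp.single j 1 : Fin 2 →₀ ℕ)) i = d i := by
      rw [Finsupp.tsub_apply]; simp [Finsupp.single_apply, hij.symm]
    have h2 : ((d - Finsupp.single i 1 : Fin 2 →₀ ℕ)) j = d j := by
      rw [Finsupp.tsub_apply]; simp [Finsupp.single_apply, hij]
    rw [h1, h2, tsub_tsub, tsub_tsub, add_comm (Finsupp.single j 1)]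
    ring_nf
  | add p q hp hq => simp only [map_add, hp, hq]

/-- A nonzero homogeneous polynomial of degree `n` cannot divide a nonzero homogeneous
polynomial of smaller degree. -/
lemma eq_zero_of_dvd_of_lt {f p : MvPolynomial (Fin 2) ℝ} {n m : ℕ}
    (hf : f.IsHomogeneous n) (hfne : f ≠ 0) (hp : p.IsHomogeneous m) (hmn : m < n)
    (hdvd : f ∣ p) : p = 0 := by
  obtain ⟨g, rfl⟩ := hdvd
  suffices hg : g = 0 by rw [hg, mul_zero]
  have hcomp : ∀ k, homogeneousComponent k g = 0 := by
    intro k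
    rcases lt_or_ge g.totalDegree k with hk | hk
    · exact homogeneousComponent_eq_zero k g hk
    · have key : homogeneousComponent (n + k) (f * g) = f * homogeneousComponent k g := by
        conv_lhs => rw [show g = ∑ i ∈ Finset.range (g.totalDegree + 1),
          homogeneousComponent i g from (sum_homogeneousComponent g).symm]
        rw [Finset.mul_sum, map_sum]
        rw [Finset.sum_eq_single_of_mem k (Finset.mem_range.mpr (by omega))]
        · rw [homogeneousComponent_of_mem ((mem_homogeneousSubmodule _ _).mpr
            (hf.mul (homogeneousComponent_isHomogeneous k g))), if_pos rfl]
        · intro i _ hik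
          rw [homogeneousComponent_of_mem ((mem_homogeneousSubmodule _ _).mpr
            (hf.mul (homogeneousComponent_isHomogeneous i g))), if_neg (by omega)]
      have hz : homogeneousComponent (n + k) (f * g) = 0 := by
        rw [homogeneousComponent_of_mem ((mem_homogeneousSubmodule _ _).mpr hp),
          if_neg (by omega)]
      have h0 : f * homogeneousComponent k g = 0 := key.symm.trans hz
      exact (mul_eq_zero.mp h0).resolve_left hfne
  rw [← sum_homogeneousComponent g]
  exact Finset.sum_eq_zero fun i _ => hcomp i

theorem squarefree_hess_ne_zero (f : MvPolynomial (Fin 2) ℝ) (n : ℕ)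
    (hn : 2 ≤ n) (hfh : f.IsHomogeneous n) (hsf : Squarefree f) :
    Hess f ≠ 0 := by
  intro hH
  have hfne : f ≠ 0 := hsf.ne_zero
  set f0 : MvPolynomial (Fin 2) ℝ := pderiv 0 f with hf0def
  set f1 : MvPolynomial (Fin 2) ℝ := pderiv 1 f with hf1def
  set a : MvPolynomial (Fin 2) ℝ := pderiv 0 f0 with hadef
  set b : MvPolynomial (Fin 2) ℝ := pderiv 0 f1 with hbdef
  set c : MvPolynomial (Fin 2) ℝ := pderiv 1 f1 with hcdef
  have hH' : a * c - b ^ 2 = 0 := hH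
  set N : ℝ := (n : ℝ) with hNdef
  have hN1 : ((n - 1 : ℕ) : ℝ) = N - 1 := by
    rw [Nat.cast_sub (by omega)]; simp [hNdef]
  have h0 : f0.IsHomogeneous (n - 1) := isHomogeneous_pderiv hfh 0
  have h1 : f1.IsHomogeneous (n - 1) := isHomogeneous_pderiv hfh 1
  have E : X 0 * f0 + X 1 * f1 = C N * f := euler hfh
  have E0 : X 0 * a + X 1 * b = C (N - 1) * f0 := by
    have := euler h0
    rwa [hN1, show pderiv 1 f0 = b from pderiv_pderiv_comm 1 0 f] at this
  have E1 : X 0 * b + X 1 * c = C (N - 1) * f1 := by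
    have := euler h1
    rwa [hN1] at this
  have hC1ne : (C (N - 1) : MvPolynomial (Fin 2) ℝ) ≠ 0 := by
    rw [Ne, C_eq_zero]
    have : (2 : ℝ) ≤ N := by rw [hNdef]; exact_mod_cast hn
    intro h; linarith
  have hCNne : (C N : MvPolynomial (Fin 2) ℝ) ≠ 0 := by
    rw [Ne, C_eq_zero]
    have : (2 : ℝ) ≤ N := by rw [hNdef]; exact_mod_cast hn
    intro h; linarith
  have hNne : N - 1 ≠ 0 := by
    have : (2 : ℝ) ≤ N := by rw [hNdef]; exact_mod_cast hn
    intro h; linarith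
  -- key identities, consequences of Euler's identity and the vanishing of the Hessian
  have key0 : C (N - 1) * f0 ^ 2 = C N * (f * a) := by
    apply mul_left_cancel₀ hC1ne
    linear_combination (C (N - 1) * a) * E +
      (a * X 0 - (X 0 * a + X 1 * b + C (N - 1) * f0)) * E0 + (a * X 1) * E1 +
      (- X 1 ^ 2) * hH'
  have key1 : C (N - 1) * f1 ^ 2 = C N * (f * c) := by
    apply mul_left_cancel₀ hC1ne
    linear_combination (C (N - 1) * c) * E +
      (c * X 1 - (X 0 * b + X 1 * c + C (N - 1) * f1)) * E1 + (c * X 0) * E0 +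
      (- X 0 ^ 2) * hH'
  -- divisibility
  have hdvd0 : f ∣ f0 := by
    have h' : f ∣ C (N - 1) * f0 ^ 2 := ⟨C N * a, by rw [key0]; ring⟩
    have h'' : f ∣ C ((N - 1)⁻¹) * (C (N - 1) * f0 ^ 2) := h'.mul_left _
    rw [← mul_assoc, ← C_mul, inv_mul_cancel₀ hNne, C_1, one_mul] at h''
    exact (hsf.dvd_pow_iff_dvd two_ne_zero).mp h''
  have hdvd1 : f ∣ f1 := by
    have h' : f ∣ C (N - 1) * f1 ^ 2 := ⟨C N * c, by rw [key1]; ring⟩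
    have h'' : f ∣ C ((N - 1)⁻¹) * (C (N - 1) * f1 ^ 2) := h'.mul_left _
    rw [← mul_assoc, ← C_mul, inv_mul_cancel₀ hNne, C_1, one_mul] at h''
    exact (hsf.dvd_pow_iff_dvd two_ne_zero).mp h''
  have hf0 : f0 = 0 := eq_zero_of_dvd_of_lt hfh hfne h0 (by omega) hdvd0
  have hf1 : f1 = 0 := eq_zero_of_dvd_of_lt hfh hfne h1 (by omega) hdvd1
  rw [hf0, hf1, mul_zero, mul_zero, add_zero] at E
  exact hfne ((mul_eq_zero.mp E.symm).resolve_left hCNne)
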